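/- Assume ℚ ⊆ k and let D ∈ U^p(R;Δ) with R = End_k(A). Then D is a (p,Δ)-variate Hasse–Schmidt derivation of A over k if and only if ε(D) = D* χ_R(D) lies in Der_k(A)[[s]]_Δ, i.e. all coefficients of the Euler logarithmic derivative of D are k-derivations of A. -/

import Mathlib

def IsCoideal {p : ℕ} (Δ : Set (Fin p →₀ ℕ)) : Prop :=
  Δ.Nonempty ∧ ∀ α ∈ Δ, ∀ β ≤ α, β ∈ Δ

def EqOnD {p : ℕ} {R : Type*} [Ring R] (Δ : Set (Fin p →₀ ℕ))
    (f g : MvPowerSeries (Fin p) R) : Prop :=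
  ∀ α ∈ Δ, MvPowerSeries.coeff (R := R) α f = MvPowerSeries.coeff (R := R) α g

def IsHS {p : ℕ} {k A : Type*} [CommRing k] [CommRing A] [Algebra k A]
    (Δ : Set (Fin p →₀ ℕ)) (D : MvPowerSeries (Fin p) (Module.End k A)) : Prop :=
  MvPowerSeries.coeff (R := Module.End k A) 0 D = 1 ∧
    ∀ α ∈ Δ, ∀ x y : A,
      MvPowerSeries.coeff (R := Module.End k A) α D (x * y) =
        ∑ z ∈ Finset.HasAntidiagonal.antidiagonal α,
          (MvPowerSeries.coeff (R := Module.End k A) z.1 D x) *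
            (MvPowerSeries.coeff (R := Module.End k A) z.2 D y)

noncomputable def chiE {p : ℕ} {R : Type*} [Ring R]
    (f : MvPowerSeries (Fin p) R) : MvPowerSeries (Fin p) R :=
  fun α => (∑ i, α i) • MvPowerSeries.coeff (R := R) α f

open Finset MvPowerSeries

namespace HSaux

theorem sum_ad_assoc {μ M : Type*} [AddCommMonoid μ] [HasAntidiagonal μ] [AddCommMonoid M]
    (α : μ) (F : μ → μ → μ → M) :
    ∑ p ∈ antidiagonal α, ∑ q ∈ antidiagonal p.1, F q.1 q.2 p.2 =
    ∑ p ∈ antidiagonal α, ∑ q ∈ antidiagonal p.2, F p.1 q.1 q.2 := by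
  simp only [Finset.sum_sigma']
  apply Finset.sum_nbij' (fun ⟨⟨_i, j⟩, ⟨k, l⟩⟩ ↦ ⟨(k, l + j), (l, j)⟩)
    (fun ⟨⟨i, _j⟩, ⟨k, l⟩⟩ ↦ ⟨(i + k, l), (i, k)⟩) <;> aesop (add simp [add_assoc])

theorem sum_ad_swap23 {μ M : Type*} [AddCommMonoid μ] [HasAntidiagonal μ] [AddCommMonoid M]
    (α : μ) (F : μ → μ → μ → M) :
    ∑ p ∈ antidiagonal α, ∑ q ∈ antidiagonal p.1, F q.1 q.2 p.2 =
    ∑ p ∈ antidiagonal α, ∑ q ∈ antidiagonal p.1, F q.1 p.2 q.2 := by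
  simp only [Finset.sum_sigma']
  apply Finset.sum_nbij' (fun ⟨⟨_i, j⟩, ⟨k, l⟩⟩ ↦ ⟨(k + j, l), (k, j)⟩)
    (fun ⟨⟨_i, j⟩, ⟨k, l⟩⟩ ↦ ⟨(k + j, l), (k, j)⟩) <;>
    aesop (add simp [add_assoc, add_comm, add_left_comm])

variable {p : ℕ} {k A : Type*} [CommRing k] [CommRing A] [Algebra k A]
variable {Δ : Set (Fin p →₀ ℕ)}

theorem zero_mem (hΔ : IsCoideal Δ) : (0 : Fin p →₀ ℕ) ∈ Δ := by
  obtain ⟨⟨α, hα⟩, hd⟩ := hΔ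
  exact hd α hα 0 zero_le

theorem mem_left (hΔ : IsCoideal Δ) {α : Fin p →₀ ℕ} (hα : α ∈ Δ)
    {q : (Fin p →₀ ℕ) × (Fin p →₀ ℕ)} (hq : q ∈ antidiagonal α) : q.1 ∈ Δ :=
  hΔ.2 α hα q.1 (le_of_add_le_left (le_of_eq (mem_antidiagonal.mp hq)))

theorem mem_right (hΔ : IsCoideal Δ) {α : Fin p →₀ ℕ} (hα : α ∈ Δ)
    {q : (Fin p →₀ ℕ) × (Fin p →₀ ℕ)} (hq : q ∈ antidiagonal α) : q.2 ∈ Δ :=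
  hΔ.2 α hα q.2 (le_of_add_le_right (le_of_eq (mem_antidiagonal.mp hq)))

section Ring
variable {R : Type*} [Ring R]

theorem EqOnD.mul' (hΔ : IsCoideal Δ) {f f' g g' : MvPowerSeries (Fin p) R}
    (hf : EqOnD Δ f f') (hg : EqOnD Δ g g') : EqOnD Δ (f * g) (f' * g') := by
  intro α hα
  rw [coeff_mul, coeff_mul]
  exact Finset.sum_congr rfl fun q hq => by
    rw [hf _ (mem_left hΔ hα hq), hg _ (mem_right hΔ hα hq)]

theorem EqOnD.trans' {f g h : MvPowerSeries (Fin p) R}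
    (hf : EqOnD Δ f g) (hg : EqOnD Δ g h) : EqOnD Δ f h :=
  fun α hα => (hf α hα).trans (hg α hα)

theorem EqOnD.symm' {f g : MvPowerSeries (Fin p) R}
    (hf : EqOnD Δ f g) : EqOnD Δ g f := fun α hα => (hf α hα).symm

theorem EqOnD.refl' (f : MvPowerSeries (Fin p) R) : EqOnD Δ f f := fun _ _ => rfl

theorem EqOnD.add' {f f' g g' : MvPowerSeries (Fin p) R}
    (hf : EqOnD Δ f f') (hg : EqOnD Δ g g') : EqOnD Δ (f + g) (f' + g') := by
  intro α hα; rw [map_add, map_add, hf α hα, hg α hα]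

theorem coeff_chiE (f : MvPowerSeries (Fin p) R) (α : Fin p →₀ ℕ) :
    coeff (R := R) α (chiE f) = (∑ i, α i) • coeff (R := R) α f := rfl

theorem EqOnD.chiE' {f g : MvPowerSeries (Fin p) R} (hf : EqOnD Δ f g) :
    EqOnD Δ (chiE f) (chiE g) := by
  intro α hα; rw [coeff_chiE, coeff_chiE, hf α hα]

theorem chiE_leibniz (f g : MvPowerSeries (Fin p) R) :
    chiE (f * g) = chiE f * g + f * chiE g := by
  ext α
  rw [map_add, coeff_chiE, coeff_mul, coeff_mul, coeff_mul, Finset.smul_sum,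
    ← Finset.sum_add_distrib]
  refine Finset.sum_congr rfl fun q hq => ?_
  have hsum : (∑ i, α i) = (∑ i, q.1 i) + (∑ i, q.2 i) := by
    rw [← Finset.sum_add_distrib]
    refine Finset.sum_congr rfl fun i _ => ?_
    rw [← mem_antidiagonal.mp hq]; rfl
  rw [coeff_chiE, coeff_chiE, hsum, add_smul, smul_mul_assoc, mul_smul_comm]

end Ring

/-- action of an operator series on an `A`-valued series -/
noncomputable def st (f : MvPowerSeries (Fin p) (Module.End k A))
    (u : MvPowerSeries (Fin p) A) : MvPowerSeries (Fin p) A :=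
  fun α => ∑ q ∈ antidiagonal α,
    MvPowerSeries.coeff (R := Module.End k A) q.1 f (coeff (R := A) q.2 u)

theorem coeff_st (f : MvPowerSeries (Fin p) (Module.End k A))
    (u : MvPowerSeries (Fin p) A) (α : Fin p →₀ ℕ) :
    coeff (R := A) α (st f u) = ∑ q ∈ antidiagonal α,
      MvPowerSeries.coeff (R := Module.End k A) q.1 f (coeff (R := A) q.2 u) := rfl

theorem st_one (u : MvPowerSeries (Fin p) A) : st (1 : MvPowerSeries (Fin p) (Module.End k A)) u = u := by
  ext α
  rw [coeff_st, Finset.sum_eq_single ((0 : Fin p →₀ ℕ), α)]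
  · simp [coeff_one]
  · rintro ⟨b1, b2⟩ hb hne
    rw [HasAntidiagonal.mem_antidiagonal] at hb
    rw [coeff_one, if_neg, LinearMap.zero_apply]
    rintro rfl
    exact hne (by simp_all)
  · simp [HasAntidiagonal.mem_antidiagonal]

theorem st_mul (f g : MvPowerSeries (Fin p) (Module.End k A)) (u : MvPowerSeries (Fin p) A) :
    st (f * g) u = st f (st g u) := by
  ext α
  simp only [coeff_st, coeff_mul, LinearMap.sum_apply, Module.End.mul_apply, map_sum]
  exact sum_ad_assoc α fun a b c =>
    MvPowerSeries.coeff (R := Module.End k A) a f (MvPowerSeries.coeff (R := Module.End k A) b g (coeff (R := A) c u))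

theorem st_C (f : MvPowerSeries (Fin p) (Module.End k A)) (x : A) (α : Fin p →₀ ℕ) :
    coeff (R := A) α (st f (C (σ := Fin p) (R := A) x)) = MvPowerSeries.coeff (R := Module.End k A) α f x := by
  rw [coeff_st, Finset.sum_eq_single ((α : Fin p →₀ ℕ), (0 : Fin p →₀ ℕ))]
  · simp [coeff_C]
  · rintro ⟨b1, b2⟩ hb hne
    rw [HasAntidiagonal.mem_antidiagonal] at hb
    rw [coeff_C, if_neg, map_zero]
    rintro rfl
    exact hne (by simp_all)
  · simp [HasAntidiagonal.mem_antidiagonal]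

theorem st_chiE_C (f : MvPowerSeries (Fin p) (Module.End k A)) (x : A) :
    st (chiE f) (C (σ := Fin p) (R := A) x) = chiE (st f (C (σ := Fin p) (R := A) x)) := by
  ext α
  rw [st_C, coeff_chiE, coeff_chiE, st_C, LinearMap.smul_apply]

theorem EqOnD.st' (hΔ : IsCoideal Δ) {f f' : MvPowerSeries (Fin p) (Module.End k A)}
    {u u' : MvPowerSeries (Fin p) A} (hf : EqOnD Δ f f') (hu : EqOnD Δ u u') :
    EqOnD Δ (st f u) (st f' u') := by
  intro α hα
  rw [coeff_st, coeff_st]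
  exact Finset.sum_congr rfl fun q hq => by
    rw [hf _ (mem_left hΔ hα hq), hu _ (mem_right hΔ hα hq)]

/-- the ring morphism `A[[s]] → End_k(A)[[s]]` induced by left multiplication -/
noncomputable def Mh (k : Type*) {A : Type*} [CommRing k] [CommRing A] [Algebra k A] {p : ℕ} :
    MvPowerSeries (Fin p) A →+* MvPowerSeries (Fin p) (Module.End k A) :=
  MvPowerSeries.map (σ := Fin p) (Algebra.lmul k A).toRingHom

theorem coeff_Mh (u : MvPowerSeries (Fin p) A) (α : Fin p →₀ ℕ) (b : A) :
    MvPowerSeries.coeff (R := Module.End k A) α (Mh k u) b = coeff (R := A) α u * b := by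
  rw [Mh, coeff_map]
  simp

theorem EqOnD.Mh' {u u' : MvPowerSeries (Fin p) A} (hu : EqOnD Δ u u') :
    EqOnD Δ (Mh k u) (Mh k u') := by
  intro α hα
  apply LinearMap.ext; intro b
  rw [coeff_Mh, coeff_Mh, hu α hα]

theorem chiE_Mh (u : MvPowerSeries (Fin p) A) :
    chiE (Mh k u) = Mh k (chiE u) := by
  apply MvPowerSeries.ext; intro α
  apply LinearMap.ext; intro b
  rw [coeff_chiE, LinearMap.smul_apply, coeff_Mh, coeff_Mh, coeff_chiE, smul_mul_assoc]

theorem chiE_C (x : A) : chiE (C (σ := Fin p) (R := A) x) = 0 := by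
  apply MvPowerSeries.ext; intro α
  rw [coeff_chiE, coeff_C, map_zero]
  by_cases h : α = 0
  · subst h; simp
  · rw [if_neg h, smul_zero]

/-- evaluation at `1 : A`, coefficientwise -/
noncomputable def ev1 (f : MvPowerSeries (Fin p) (Module.End k A)) : MvPowerSeries (Fin p) A :=
  fun α => MvPowerSeries.coeff (R := Module.End k A) α f 1

theorem coeff_ev1 (f : MvPowerSeries (Fin p) (Module.End k A)) (α : Fin p →₀ ℕ) :
    coeff (R := A) α (ev1 f) = MvPowerSeries.coeff (R := Module.End k A) α f 1 := rfl

theorem EqOnD.ev1' {f g : MvPowerSeries (Fin p) (Module.End k A)} (hf : EqOnD Δ f g) :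
    EqOnD Δ (ev1 f) (ev1 g) := by
  intro α hα; rw [coeff_ev1, coeff_ev1, hf α hα]

theorem ev1_add (f g : MvPowerSeries (Fin p) (Module.End k A)) :
    ev1 (f + g) = ev1 f + ev1 g := by
  ext α; rw [map_add, coeff_ev1, coeff_ev1, coeff_ev1, map_add, LinearMap.add_apply]

theorem ev1_mul_Mh (f : MvPowerSeries (Fin p) (Module.End k A)) (u : MvPowerSeries (Fin p) A) :
    ev1 (f * Mh k u) = st f u := by
  ext α
  rw [coeff_ev1, coeff_st, coeff_mul, LinearMap.sum_apply]
  exact Finset.sum_congr rfl fun q _ => by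
    rw [Module.End.mul_apply, coeff_Mh, mul_one]

theorem Mh_mul_ev1 (w : MvPowerSeries (Fin p) A) (f : MvPowerSeries (Fin p) (Module.End k A)) :
    ev1 (Mh k w * f) = w * ev1 f := by
  ext α
  rw [coeff_ev1, coeff_mul, coeff_mul, LinearMap.sum_apply]
  exact Finset.sum_congr rfl fun q _ => by
    rw [Module.End.mul_apply, coeff_Mh, coeff_ev1]

theorem ev1_Mh (u : MvPowerSeries (Fin p) A) : ev1 (Mh k u) = u := by
  ext α
  rw [coeff_ev1, coeff_Mh, mul_one]

/-- the key commutation rule for an HS-type series -/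
theorem KC (hΔ : IsCoideal Δ) {D : MvPowerSeries (Fin p) (Module.End k A)}
    (hHS : ∀ α ∈ Δ, ∀ x y : A,
      MvPowerSeries.coeff (R := Module.End k A) α D (x * y) =
        ∑ z ∈ Finset.HasAntidiagonal.antidiagonal α,
          (MvPowerSeries.coeff (R := Module.End k A) z.1 D x) *
            (MvPowerSeries.coeff (R := Module.End k A) z.2 D y))
    (u : MvPowerSeries (Fin p) A) :
    EqOnD Δ (D * Mh k u) (Mh k (st D u) * D) := by
  intro α hα
  apply LinearMap.ext; intro b
  rw [coeff_mul, coeff_mul, LinearMap.sum_apply, LinearMap.sum_apply]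
  have lhs : ∀ q ∈ antidiagonal α,
      (MvPowerSeries.coeff (R := Module.End k A) q.1 D *
        MvPowerSeries.coeff (R := Module.End k A) q.2 (Mh k u)) b =
      ∑ r ∈ antidiagonal q.1,
        MvPowerSeries.coeff (R := Module.End k A) r.1 D (coeff (R := A) q.2 u) *
          MvPowerSeries.coeff (R := Module.End k A) r.2 D b := by
    intro q hq
    rw [Module.End.mul_apply, coeff_Mh, hHS q.1 (mem_left hΔ hα hq)]
  rw [Finset.sum_congr rfl lhs]
  have rhs : ∀ q ∈ antidiagonal α,
      (MvPowerSeries.coeff (R := Module.End k A) q.1 (Mh k (st D u)) *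
        MvPowerSeries.coeff (R := Module.End k A) q.2 D) b =
      ∑ r ∈ antidiagonal q.1,
        MvPowerSeries.coeff (R := Module.End k A) r.1 D (coeff (R := A) r.2 u) *
          MvPowerSeries.coeff (R := Module.End k A) q.2 D b := by
    intro q hq
    rw [Module.End.mul_apply, coeff_Mh, coeff_st, Finset.sum_mul]
  rw [Finset.sum_congr rfl rhs]
  exact sum_ad_swap23 α fun a b' c =>
    MvPowerSeries.coeff (R := Module.End k A) a D (coeff (R := A) c u) *
      MvPowerSeries.coeff (R := Module.End k A) b' D b



theorem sum_ad_swap {μ M : Type*} [AddCommMonoid μ] [HasAntidiagonal μ] [AddCommMonoid M]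
    (α : μ) (F : μ → μ → M) :
    ∑ q ∈ antidiagonal α, F q.1 q.2 = ∑ q ∈ antidiagonal α, F q.2 q.1 := by
  rw [← Finset.HasAntidiagonal.map_swap_antidiagonal (n := α), Finset.sum_map]
  simp

theorem KCs (hΔ : IsCoideal Δ) {D Ds : MvPowerSeries (Fin p) (Module.End k A)}
    (hHS : ∀ α ∈ Δ, ∀ x y : A,
      MvPowerSeries.coeff (R := Module.End k A) α D (x * y) =
        ∑ z ∈ Finset.HasAntidiagonal.antidiagonal α,
          (MvPowerSeries.coeff (R := Module.End k A) z.1 D x) *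
            (MvPowerSeries.coeff (R := Module.End k A) z.2 D y))
    (h1 : EqOnD Δ (D * Ds) 1) (h2 : EqOnD Δ (Ds * D) 1)
    (v : MvPowerSeries (Fin p) A) :
    EqOnD Δ (Ds * Mh k v) (Mh k (st Ds v) * Ds) := by
  have hA : EqOnD Δ (D * Mh k (st Ds v)) (Mh k v * D) := by
    refine EqOnD.trans' (KC hΔ hHS _) ?_
    refine EqOnD.mul' hΔ ?_ (EqOnD.refl' D)
    refine EqOnD.Mh' ?_
    rw [← st_mul]
    have h := EqOnD.st' hΔ h1 (EqOnD.refl' v)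
    rwa [st_one] at h
  have e1 : EqOnD Δ (Ds * Mh k v) (Ds * Mh k v * (D * Ds)) := by
    have h := EqOnD.mul' hΔ (EqOnD.refl' (Ds * Mh k v)) h1
    rw [mul_one] at h
    exact EqOnD.symm' h
  have e3 : EqOnD Δ (Ds * Mh k v * (D * Ds)) (Ds * (D * Mh k (st Ds v)) * Ds) := by
    have h : EqOnD Δ (Ds * (Mh k v * D) * Ds) (Ds * (D * Mh k (st Ds v)) * Ds) :=
      EqOnD.mul' hΔ (EqOnD.mul' hΔ (EqOnD.refl' Ds) (EqOnD.symm' hA)) (EqOnD.refl' Ds)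
    have e2 : Ds * Mh k v * (D * Ds) = Ds * (Mh k v * D) * Ds := by noncomm_ring
    rwa [← e2] at h
  have e5 : EqOnD Δ (Ds * (D * Mh k (st Ds v)) * Ds) (Mh k (st Ds v) * Ds) := by
    have h := EqOnD.mul' hΔ h2 (EqOnD.refl' (Mh k (st Ds v) * Ds))
    rw [one_mul] at h
    have e4 : Ds * (D * Mh k (st Ds v)) * Ds = Ds * D * (Mh k (st Ds v) * Ds) := by noncomm_ring
    rwa [← e4] at h
  exact EqOnD.trans' (EqOnD.trans' e1 e3) e5

theorem forward (hΔ : IsCoideal Δ) {D Ds : MvPowerSeries (Fin p) (Module.End k A)}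
    (hHS : ∀ α ∈ Δ, ∀ x y : A,
      MvPowerSeries.coeff (R := Module.End k A) α D (x * y) =
        ∑ z ∈ Finset.HasAntidiagonal.antidiagonal α,
          (MvPowerSeries.coeff (R := Module.End k A) z.1 D x) *
            (MvPowerSeries.coeff (R := Module.End k A) z.2 D y))
    (h1 : EqOnD Δ (D * Ds) 1) (h2 : EqOnD Δ (Ds * D) 1) :
    ∀ α ∈ Δ, ∀ x y : A,
      MvPowerSeries.coeff (R := Module.End k A) α (Ds * chiE D) (x * y) =
        x * MvPowerSeries.coeff (R := Module.End k A) α (Ds * chiE D) y +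
          MvPowerSeries.coeff (R := Module.End k A) α (Ds * chiE D) x * y := by
  intro α hα x y
  set ε : MvPowerSeries (Fin p) (Module.End k A) := Ds * chiE D with hεdef
  set Cx : MvPowerSeries (Fin p) A := C (σ := Fin p) (R := A) x with hCx
  set Cy : MvPowerSeries (Fin p) A := C (σ := Fin p) (R := A) y with hCy
  set φx : MvPowerSeries (Fin p) A := st D Cx with hφx
  -- step 0 : algebraic rearrangement
  have step0 : ε * Mh k (C (σ := Fin p) (R := A) (x * y)) = Ds * (chiE D * Mh k Cx) * Mh k Cy := by
    rw [show C (σ := Fin p) (R := A) (x * y) = Cx * Cy from map_mul _ x y, map_mul, hεdef]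
    noncomm_ring
  -- step 1 : chi Leibniz on D * Mh Cx
  have step1 : chiE D * Mh k Cx = chiE (D * Mh k Cx) := by
    rw [chiE_leibniz, chiE_Mh, hCx, chiE_C, map_zero, mul_zero, add_zero]
  -- step 2 : commutation
  have step2 : EqOnD Δ (chiE (D * Mh k Cx)) (Mh k (chiE φx) * D + Mh k φx * chiE D) := by
    refine EqOnD.trans' (EqOnD.chiE' (KC hΔ hHS Cx)) ?_
    rw [chiE_leibniz, chiE_Mh]
    exact EqOnD.refl' _
  -- combine : ε * Mh (C (x*y)) ≡ T1 + T2
  have comb : EqOnD Δ (ε * Mh k (C (σ := Fin p) (R := A) (x * y)))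
      (Ds * Mh k (chiE φx) * (D * Mh k Cy) + Ds * Mh k φx * (chiE D * Mh k Cy)) := by
    rw [step0, step1]
    have h := EqOnD.mul' hΔ
      (EqOnD.mul' hΔ (EqOnD.refl' Ds) step2) (EqOnD.refl' (Mh k Cy))
    refine EqOnD.trans' h ?_
    have : Ds * (Mh k (chiE φx) * D + Mh k φx * chiE D) * Mh k Cy =
        Ds * Mh k (chiE φx) * (D * Mh k Cy) + Ds * Mh k φx * (chiE D * Mh k Cy) := by
      noncomm_ring
    rw [this]
    exact EqOnD.refl' _
  -- T1
  have hstεx : st Ds (chiE φx) = st ε Cx := by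
    rw [hφx, ← st_chiE_C, ← st_mul, hεdef]
  have T1 : EqOnD Δ (Ds * Mh k (chiE φx) * (D * Mh k Cy)) (Mh k (st ε Cx * Cy)) := by
    have hk := KCs hΔ hHS h1 h2 (chiE φx)
    rw [hstεx] at hk
    have h := EqOnD.mul' hΔ hk (EqOnD.refl' (D * Mh k Cy))
    refine EqOnD.trans' h ?_
    have e : Mh k (st ε Cx) * Ds * (D * Mh k Cy) =
        Mh k (st ε Cx) * (Ds * D) * Mh k Cy := by noncomm_ring
    rw [e]
    have h2' := EqOnD.mul' hΔ
      (EqOnD.mul' hΔ (EqOnD.refl' (Mh k (st ε Cx))) h2) (EqOnD.refl' (Mh k Cy))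
    refine EqOnD.trans' h2' ?_
    rw [mul_one, ← map_mul]
    exact EqOnD.refl' _
  -- T2
  have T2 : EqOnD Δ (Ds * Mh k φx * (chiE D * Mh k Cy)) (Mh k Cx * (ε * Mh k Cy)) := by
    have hk := KCs hΔ hHS h1 h2 φx
    have hst : EqOnD Δ (st Ds φx) Cx := by
      rw [hφx, ← st_mul]
      have h := EqOnD.st' hΔ h2 (EqOnD.refl' Cx)
      rwa [st_one] at h
    have hk2 : EqOnD Δ (Ds * Mh k φx) (Mh k Cx * Ds) :=
      EqOnD.trans' hk (EqOnD.mul' hΔ (EqOnD.Mh' hst) (EqOnD.refl' Ds))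
    have h := EqOnD.mul' hΔ hk2 (EqOnD.refl' (chiE D * Mh k Cy))
    refine EqOnD.trans' h ?_
    have e : Mh k Cx * Ds * (chiE D * Mh k Cy) = Mh k Cx * (ε * Mh k Cy) := by
      rw [hεdef]; noncomm_ring
    rw [e]
    exact EqOnD.refl' _
  -- put together and evaluate at 1
  have final : EqOnD Δ (st ε (C (σ := Fin p) (R := A) (x * y))) (st ε Cx * Cy + Cx * st ε Cy) := by
    have h := EqOnD.ev1' (EqOnD.trans' comb (EqOnD.add' T1 T2))
    rw [ev1_mul_Mh, ev1_add, ev1_Mh, Mh_mul_ev1, ev1_mul_Mh] at h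
    exact h
  have hc := final α hα
  rw [st_C, map_add, coeff_mul_C, coeff_C_mul, st_C, st_C] at hc
  rw [hc, add_comm]

theorem converse (hΔ : IsCoideal Δ) [Algebra ℚ k] {D Ds : MvPowerSeries (Fin p) (Module.End k A)}
    (hD0 : MvPowerSeries.coeff (R := Module.End k A) 0 D = 1)
    (h1 : EqOnD Δ (D * Ds) 1) (h2 : EqOnD Δ (Ds * D) 1)
    (hder : ∀ α ∈ Δ, ∀ x y : A,
      MvPowerSeries.coeff (R := Module.End k A) α (Ds * chiE D) (x * y) =
        x * MvPowerSeries.coeff (R := Module.End k A) α (Ds * chiE D) y +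
          MvPowerSeries.coeff (R := Module.End k A) α (Ds * chiE D) x * y) :
    ∀ α ∈ Δ, ∀ x y : A,
      MvPowerSeries.coeff (R := Module.End k A) α D (x * y) =
        ∑ z ∈ Finset.HasAntidiagonal.antidiagonal α,
          (MvPowerSeries.coeff (R := Module.End k A) z.1 D x) *
            (MvPowerSeries.coeff (R := Module.End k A) z.2 D y) := by
  set ε : MvPowerSeries (Fin p) (Module.End k A) := Ds * chiE D with hεdef
  -- χ(D) ≡ D * ε on Δ
  have hDE : EqOnD Δ (D * ε) (chiE D) := by
    have h := EqOnD.mul' hΔ h1 (EqOnD.refl' (chiE D))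
    rw [one_mul, mul_assoc] at h
    exact h
  have hkey : ∀ δ ∈ Δ, ∀ z : A,
      ∑ q ∈ antidiagonal δ,
        MvPowerSeries.coeff (R := Module.End k A) q.1 D
          (MvPowerSeries.coeff (R := Module.End k A) q.2 ε z) =
      (∑ i, δ i) • (MvPowerSeries.coeff (R := Module.End k A) δ D z) := by
    intro δ hδ z
    have h := LinearMap.congr_fun (hDE δ hδ) z
    rw [coeff_mul, LinearMap.sum_apply, coeff_chiE, LinearMap.smul_apply] at h
    simpa only [Module.End.mul_apply] using h
  have hε0 : MvPowerSeries.coeff (R := Module.End k A) 0 ε = 0 := by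
    rw [hεdef, coeff_mul, Finsupp.antidiagonal_zero, Finset.sum_singleton]
    have : MvPowerSeries.coeff (R := Module.End k A) 0 (chiE D) = 0 := by
      rw [coeff_chiE]
      simp
    rw [this, mul_zero]
  -- strong induction on the total degree
  suffices main : ∀ n : ℕ, ∀ α ∈ Δ, (∑ i, α i) = n → ∀ x y : A,
      MvPowerSeries.coeff (R := Module.End k A) α D (x * y) =
        ∑ z ∈ Finset.HasAntidiagonal.antidiagonal α,
          (MvPowerSeries.coeff (R := Module.End k A) z.1 D x) *
            (MvPowerSeries.coeff (R := Module.End k A) z.2 D y) by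
    intro α hα; exact main _ α hα rfl
  intro n
  induction n using Nat.strong_induction_on with
  | _ n IH =>
    intro α hα hn x y
    rcases Nat.eq_zero_or_pos n with h0 | hpos
    · subst h0
      have hα0 : α = 0 := by
        ext i
        exact Finset.sum_eq_zero_iff.mp hn i (Finset.mem_univ i)
      subst hα0
      rw [hD0, Finsupp.antidiagonal_zero, Finset.sum_singleton, hD0]
      simp
    · -- the sum-splitting fact for every pair in the antidiagonal
      have hsplit : ∀ q ∈ antidiagonal α, (∑ i, q.1 i) + (∑ i, q.2 i) = n := by
        intro q hq
        rw [← hn, ← Finset.sum_add_distrib]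
        exact Finset.sum_congr rfl fun i _ => by rw [← mem_antidiagonal.mp hq]; rfl
      -- expansion of D on products with an ε-factor
      have expand : ∀ q ∈ antidiagonal α, ∀ a b : A,
          MvPowerSeries.coeff (R := Module.End k A) q.1 D
            (a * MvPowerSeries.coeff (R := Module.End k A) q.2 ε b) =
          ∑ r ∈ antidiagonal q.1,
            MvPowerSeries.coeff (R := Module.End k A) r.1 D a *
              MvPowerSeries.coeff (R := Module.End k A) r.2 D
                (MvPowerSeries.coeff (R := Module.End k A) q.2 ε b) := by
        intro q hq a b
        by_cases h2 : q.2 = 0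
        · rw [h2, hε0]
          simp
        · have hq2pos : 0 < ∑ i, q.2 i :=
            Nat.pos_of_ne_zero fun hzero => h2 (by
              ext i; exact Finset.sum_eq_zero_iff.mp hzero i (Finset.mem_univ i))
          have hlt : (∑ i, q.1 i) < n := by
            have := hsplit q hq
            omega
          exact IH _ hlt q.1 (mem_left hΔ hα hq) rfl _ _
      -- main computation
      have calc1 : (∑ i, α i) • (MvPowerSeries.coeff (R := Module.End k A) α D (x * y)) =
          ∑ q ∈ antidiagonal α,
            MvPowerSeries.coeff (R := Module.End k A) q.1 D
              (MvPowerSeries.coeff (R := Module.End k A) q.2 ε (x * y)) :=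
        (hkey α hα (x * y)).symm
      have calc2 : ∑ q ∈ antidiagonal α,
          MvPowerSeries.coeff (R := Module.End k A) q.1 D
            (MvPowerSeries.coeff (R := Module.End k A) q.2 ε (x * y)) =
          (∑ q ∈ antidiagonal α, ∑ r ∈ antidiagonal q.1,
            MvPowerSeries.coeff (R := Module.End k A) r.1 D x *
              MvPowerSeries.coeff (R := Module.End k A) r.2 D
                (MvPowerSeries.coeff (R := Module.End k A) q.2 ε y)) +
          (∑ q ∈ antidiagonal α, ∑ r ∈ antidiagonal q.1,
            MvPowerSeries.coeff (R := Module.End k A) r.1 D y *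
              MvPowerSeries.coeff (R := Module.End k A) r.2 D
                (MvPowerSeries.coeff (R := Module.End k A) q.2 ε x)) := by
        rw [← Finset.sum_add_distrib]
        refine Finset.sum_congr rfl fun q hq => ?_
        rw [hder q.2 (mem_right hΔ hα hq) x y, map_add, expand q hq x y]
        congr 1
        rw [show MvPowerSeries.coeff (R := Module.End k A) q.2 ε x * y =
            y * MvPowerSeries.coeff (R := Module.End k A) q.2 ε x from mul_comm _ _]
        exact expand q hq y x
      -- regroup the two triple sums
      have calc3 : (∑ q ∈ antidiagonal α, ∑ r ∈ antidiagonal q.1,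
            MvPowerSeries.coeff (R := Module.End k A) r.1 D x *
              MvPowerSeries.coeff (R := Module.End k A) r.2 D
                (MvPowerSeries.coeff (R := Module.End k A) q.2 ε y)) =
          ∑ q ∈ antidiagonal α,
            MvPowerSeries.coeff (R := Module.End k A) q.1 D x *
              ((∑ i, q.2 i) • MvPowerSeries.coeff (R := Module.End k A) q.2 D y) := by
        rw [sum_ad_assoc α (fun a b c => MvPowerSeries.coeff (R := Module.End k A) a D x *
          MvPowerSeries.coeff (R := Module.End k A) b D
            (MvPowerSeries.coeff (R := Module.End k A) c ε y))]
        refine Finset.sum_congr rfl fun q hq => ?_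
        rw [← Finset.mul_sum, hkey q.2 (mem_right hΔ hα hq) y]
      have calc4 : (∑ q ∈ antidiagonal α, ∑ r ∈ antidiagonal q.1,
            MvPowerSeries.coeff (R := Module.End k A) r.1 D y *
              MvPowerSeries.coeff (R := Module.End k A) r.2 D
                (MvPowerSeries.coeff (R := Module.End k A) q.2 ε x)) =
          ∑ q ∈ antidiagonal α,
            ((∑ i, q.1 i) • MvPowerSeries.coeff (R := Module.End k A) q.1 D x) *
              MvPowerSeries.coeff (R := Module.End k A) q.2 D y := by
        rw [sum_ad_assoc α (fun a b c => MvPowerSeries.coeff (R := Module.End k A) a D y *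
          MvPowerSeries.coeff (R := Module.End k A) b D
            (MvPowerSeries.coeff (R := Module.End k A) c ε x))]
        simp only [← Finset.mul_sum]
        rw [sum_ad_swap α (fun a b => MvPowerSeries.coeff (R := Module.End k A) a D y *
          ∑ r ∈ antidiagonal b, MvPowerSeries.coeff (R := Module.End k A) r.1 D
            (MvPowerSeries.coeff (R := Module.End k A) r.2 ε x))]
        refine Finset.sum_congr rfl fun q hq => ?_
        rw [hkey q.1 (mem_left hΔ hα hq) x]
        exact mul_comm _ _
      have calc5 : (∑ q ∈ antidiagonal α,
            MvPowerSeries.coeff (R := Module.End k A) q.1 D x *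
              ((∑ i, q.2 i) • MvPowerSeries.coeff (R := Module.End k A) q.2 D y)) +
          (∑ q ∈ antidiagonal α,
            ((∑ i, q.1 i) • MvPowerSeries.coeff (R := Module.End k A) q.1 D x) *
              MvPowerSeries.coeff (R := Module.End k A) q.2 D y) =
          (∑ i, α i) • ∑ z ∈ Finset.HasAntidiagonal.antidiagonal α,
            (MvPowerSeries.coeff (R := Module.End k A) z.1 D x) *
              (MvPowerSeries.coeff (R := Module.End k A) z.2 D y) := by
        rw [Finset.smul_sum, ← Finset.sum_add_distrib]
        refine Finset.sum_congr rfl fun q hq => ?_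
        rw [mul_smul_comm, smul_mul_assoc, ← add_smul]
        rw [show (∑ i, q.2 i) + (∑ i, q.1 i) = ∑ i, α i from by
          rw [hn]; rw [← hsplit q hq]; omega]
      -- put everything together and cancel the natural number factor
      have hfin : (∑ i, α i) • (MvPowerSeries.coeff (R := Module.End k A) α D (x * y)) =
          (∑ i, α i) • ∑ z ∈ Finset.HasAntidiagonal.antidiagonal α,
            (MvPowerSeries.coeff (R := Module.End k A) z.1 D x) *
              (MvPowerSeries.coeff (R := Module.End k A) z.2 D y) := by
        rw [calc1, calc2, calc3, calc4, calc5]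
      rw [hn] at hfin
      -- cancel n
      have hu : IsUnit ((n : ℕ) : k) := by
        have hcast : ((n : ℕ) : k) = algebraMap ℚ k ((n : ℕ) : ℚ) := by
          rw [map_natCast]
        rw [hcast]
        exact (isUnit_iff_ne_zero.mpr (by exact_mod_cast hpos.ne')).map (algebraMap ℚ k)
      have hcancel : ((n : ℕ) : k) • (MvPowerSeries.coeff (R := Module.End k A) α D (x * y)) =
          ((n : ℕ) : k) • ∑ z ∈ Finset.HasAntidiagonal.antidiagonal α,
            (MvPowerSeries.coeff (R := Module.End k A) z.1 D x) *
              (MvPowerSeries.coeff (R := Module.End k A) z.2 D y) := by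
        rw [Nat.cast_smul_eq_nsmul k n, Nat.cast_smul_eq_nsmul k n]
        exact hfin
      exact hu.smul_left_cancel.mp hcancel

end HSaux

/-- Assume `ℚ ⊆ k`. A unit `D ∈ U^p(End_k(A);Δ)` (with inverse `Ds`) is a `(p,Δ)`-variate
Hasse–Schmidt derivation iff all coefficients of `ε(D) = D* χ_R(D)` on `Δ` are
`k`-derivations of `A`. -/
theorem isHS_iff_eps_derivation {p : ℕ} {k A : Type*} [CommRing k] [Algebra ℚ k]
    [CommRing A] [Algebra k A]
    (Δ : Set (Fin p →₀ ℕ)) (hΔ : IsCoideal Δ)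
    (D Ds : MvPowerSeries (Fin p) (Module.End k A))
    (hD0 : MvPowerSeries.coeff (R := Module.End k A) 0 D = 1)
    (hDs0 : MvPowerSeries.coeff (R := Module.End k A) 0 Ds = 1)
    (h1 : EqOnD Δ (D * Ds) 1) (h2 : EqOnD Δ (Ds * D) 1) :
    IsHS Δ D ↔
      ∀ α ∈ Δ, ∀ x y : A,
        MvPowerSeries.coeff (R := Module.End k A) α (Ds * chiE D) (x * y) =
          x * MvPowerSeries.coeff (R := Module.End k A) α (Ds * chiE D) y +
            MvPowerSeries.coeff (R := Module.End k A) α (Ds * chiE D) x * y := by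
  constructor
  · intro hHS
    exact HSaux.forward hΔ hHS.2 h1 h2
  · intro hder
    exact ⟨hD0, HSaux.converse hΔ hD0 h1 h2 hder⟩
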